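/- The polynomial P = y₀₀²y₀₂ − y₁₂y₂₂² − y₀₁y₁₁² − 5y₀₁²y₂₂ + (−y₀₀y₀₁ + y₀₂y₂₂ − y₁₁y₁₂)y_g − y_g³ is an equation for the image of the map φ_{2K_Θ} on the Klein curve: substituting y₀₀ = p₀₁², y₀₁ = p₀₁p₀₂, y₀₂ = p₀₁p₁₂, y₁₁ = p₀₂², y₁₂ = p₀₂p₁₂, y₂₂ = p₁₂², y_g = g̃ into P produces a polynomial in ℂ[u₀,u₁,u₂,v₀,v₁,v₂] that lies in the ideal generated by f(u₀,u₁,u₂) and f(v₀,v₁,v₂); i.e. there exist polynomials A, B ∈ ℂ[u₀,u₁,u₂,v₀,v₁,v₂] with P(p₀₁², p₀₁p₀₂, p₀₁p₁₂, p₀₂², p₀₂p₁₂, p₁₂², g̃) = A·f(u) + B·f(v). -/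
import Mathlib


set_option maxHeartbeats 4000000
open MvPolynomial

namespace Klein56

/-- The Klein quartic in the variables `u₀,u₁,u₂` (variables `0,1,2` of `Fin 6`):
`f(u) = u₀u₁³ + u₁u₂³ + u₂u₀³`. -/
noncomputable def fu : MvPolynomial (Fin 6) ℂ :=
  X 0 * X 1 ^ 3 + X 1 * X 2 ^ 3 + X 2 * X 0 ^ 3

/-- The Klein quartic in the variables `v₀,v₁,v₂` (variables `3,4,5` of `Fin 6`):
`f(v) = v₀v₁³ + v₁v₂³ + v₂v₀³`. -/
noncomputable def fv : MvPolynomial (Fin 6) ℂ :=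
  X 3 * X 4 ^ 3 + X 4 * X 5 ^ 3 + X 5 * X 3 ^ 3

/-- `p₀₁ = u₀v₁ − u₁v₀`. -/
noncomputable def p01 : MvPolynomial (Fin 6) ℂ := X 0 * X 4 - X 1 * X 3
/-- `p₀₂ = u₀v₂ − u₂v₀`. -/
noncomputable def p02 : MvPolynomial (Fin 6) ℂ := X 0 * X 5 - X 2 * X 3
/-- `p₁₂ = u₁v₂ − u₂v₁`. -/
noncomputable def p12 : MvPolynomial (Fin 6) ℂ := X 1 * X 5 - X 2 * X 4

/-- `g̃ = u₀u₁v₁² + u₁u₂v₂² + u₂u₀v₀² + v₀v₁u₁² + v₁v₂u₂² + v₂v₀u₀²`. -/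
noncomputable def gt : MvPolynomial (Fin 6) ℂ :=
  X 0 * X 1 * X 4 ^ 2 + X 1 * X 2 * X 5 ^ 2 + X 2 * X 0 * X 3 ^ 2
    + X 3 * X 4 * X 1 ^ 2 + X 4 * X 5 * X 2 ^ 2 + X 5 * X 3 * X 0 ^ 2

/-- The polynomial
`P = y₀₀²y₀₂ − y₁₂y₂₂² − y₀₁y₁₁² − 5y₀₁²y₂₂ + (−y₀₀y₀₁ + y₀₂y₂₂ − y₁₁y₁₂)y_g − y_g³`
in the variables `(y₀₀, y₀₁, y₀₂, y₁₁, y₁₂, y₂₂, y_g)`, indexed by `Fin 7`. -/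
noncomputable def P : MvPolynomial (Fin 7) ℂ :=
  X 0 ^ 2 * X 2 - X 4 * X 5 ^ 2 - X 1 * X 3 ^ 2 - 5 * X 1 ^ 2 * X 5
    + (-(X 0 * X 1) + X 2 * X 5 - X 3 * X 4) * X 6 - X 6 ^ 3

lemma vec7_five {α : Type*} (a₀ a₁ a₂ a₃ a₄ a₅ a₆ : α) :
    (![a₀, a₁, a₂, a₃, a₄, a₅, a₆] : Fin 7 → α) 5 = a₅ := rfl

lemma vec7_six {α : Type*} (a₀ a₁ a₂ a₃ a₄ a₅ a₆ : α) :
    (![a₀, a₁, a₂, a₃, a₄, a₅, a₆] : Fin 7 → α) 6 = a₆ := rfl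

noncomputable def Apoly : MvPolynomial (Fin 6) ℂ :=
  (1) * X 2 ^ 2 * X 4 ^ 2 * X 5 ^ 4
  + (10) * X 2 ^ 2 * X 3 * X 4 ^ 4 * X 5
  + (4) * X 2 ^ 2 * X 3 ^ 3 * X 4 * X 5 ^ 2
  + (-1) * X 2 ^ 2 * X 3 ^ 6
  + (-12) * X 1 * X 2 * X 3 * X 4 ^ 3 * X 5 ^ 2
  + (4) * X 1 * X 2 * X 3 ^ 3 * X 5 ^ 3
  + (-6) * X 1 * X 2 * X 3 ^ 4 * X 4 ^ 2
  + (-1) * X 1 ^ 2 * X 5 ^ 6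
  + (-12) * X 1 ^ 2 * X 3 * X 4 ^ 2 * X 5 ^ 3
  + (-15) * X 1 ^ 2 * X 3 ^ 2 * X 4 ^ 4
  + (-6) * X 1 ^ 2 * X 3 ^ 4 * X 4 * X 5
  + (-6) * X 0 * X 2 * X 4 ^ 4 * X 5 ^ 2
  + (-15) * X 0 * X 2 * X 3 ^ 2 * X 4 * X 5 ^ 3
  + (1) * X 0 * X 2 * X 3 ^ 3 * X 4 ^ 3
  + (-3) * X 0 * X 2 * X 3 ^ 5 * X 5
  + (10) * X 0 * X 1 * X 4 ^ 3 * X 5 ^ 3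
  + (6) * X 0 * X 1 * X 3 * X 4 ^ 5
  + (-6) * X 0 * X 1 * X 3 ^ 2 * X 5 ^ 4
  + (-6) * X 0 * X 1 * X 3 ^ 3 * X 4 ^ 2 * X 5
  + (-1) * X 0 ^ 2 * X 4 ^ 6
  + (6) * X 0 ^ 2 * X 3 * X 4 * X 5 ^ 4
  + (-3) * X 0 ^ 2 * X 3 ^ 4 * X 5 ^ 2

noncomputable def Bpoly : MvPolynomial (Fin 6) ℂ :=
  (-1) * X 2 ^ 6 * X 4 ^ 2
  + (-4) * X 1 * X 2 ^ 5 * X 4 * X 5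
  + (-3) * X 1 ^ 2 * X 2 ^ 4 * X 5 ^ 2
  + (16) * X 1 ^ 3 * X 2 ^ 3 * X 3 * X 4
  + (-6) * X 1 ^ 4 * X 2 ^ 2 * X 3 * X 5
  + (-1) * X 1 ^ 6 * X 3 ^ 2
  + (9) * X 0 * X 1 * X 2 ^ 4 * X 3 ^ 2
  + (-6) * X 0 * X 1 ^ 2 * X 2 ^ 3 * X 4 ^ 2
  + (-16) * X 0 * X 1 ^ 3 * X 2 ^ 2 * X 4 * X 5
  + (6) * X 0 * X 1 ^ 4 * X 2 * X 5 ^ 2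
  + (12) * X 0 * X 1 ^ 5 * X 3 * X 4
  + (-6) * X 0 ^ 2 * X 2 ^ 4 * X 3 * X 4
  + (-12) * X 0 ^ 2 * X 1 * X 2 ^ 3 * X 3 * X 5
  + (3) * X 0 ^ 2 * X 1 ^ 3 * X 2 * X 3 ^ 2
  + (-9) * X 0 ^ 2 * X 1 ^ 4 * X 4 ^ 2
  + (4) * X 0 ^ 3 * X 1 ^ 3 * X 3 * X 5
  + (-6) * X 0 ^ 4 * X 1 ^ 2 * X 4 * X 5
  + (-1) * X 0 ^ 6 * X 5 ^ 2

/-- `P` is an equation for the image of `φ_{2K_Θ}` on the Klein curve: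
substituting `(p₀₁², p₀₁p₀₂, p₀₁p₁₂, p₀₂², p₀₂p₁₂, p₁₂², g̃)` into `P` gives a
polynomial lying in the ideal generated by `f(u)` and `f(v)`. -/
theorem P_vanishes_on_image :
    ∃ A B : MvPolynomial (Fin 6) ℂ,
      aeval ![p01 ^ 2, p01 * p02, p01 * p12, p02 ^ 2, p02 * p12, p12 ^ 2, gt] P =
        A * fu + B * fv := by
  refine ⟨Apoly, Bpoly, ?_⟩
  simp only [P, map_add, map_sub, map_mul, map_pow, map_neg, map_ofNat, aeval_X,
    Matrix.cons_val_zero, Matrix.cons_val_one, Matrix.head_cons, Matrix.cons_val_two,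
    Matrix.tail_cons, Matrix.cons_val_three, Matrix.cons_val_four, vec7_five, vec7_six]
  unfold Apoly Bpoly p01 p02 p12 gt fu fv
  ring

end Klein56
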